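/- For the explicit Lévy–Smirnov density g_{1/2}(x) = exp(-1/(4x))/(2√π x^{3/2}), the function h(x) = ∫_0^∞ t^{-2} g_{1/2}(x/t²) g_{1/2}(t) dt satisfies ∫_0^∞ e^{-px} h(x) dx = exp(-p^{1/4}) for all p > 0. -/

import Mathlib

open MeasureTheory Real Set Filter

noncomputable def levySmirnov (x : ℝ) : ℝ :=
  Real.exp (-1 / (4 * x)) / (2 * Real.sqrt π * x ^ ((3 : ℝ) / 2))

section base
variable {q x : ℝ}

private noncomputable def lsE (q x : ℝ) : ℝ := Real.exp (-(q*x) - 1/(4*x))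

private noncomputable def lsF (q x : ℝ) : ℝ :=
  Real.sqrt q * Real.sqrt x - (2 * Real.sqrt x)⁻¹

private noncomputable def lsF' (q x : ℝ) : ℝ :=
  Real.sqrt q / (2 * Real.sqrt x) + (4 * (x * Real.sqrt x))⁻¹

private lemma lsF_hasDeriv (hx : (0:ℝ) < x) :
    HasDerivAt (lsF q) (lsF' q x) x := by
  have hs : Real.sqrt x ≠ 0 := (Real.sqrt_pos.2 hx).ne'
  have hx2 : Real.sqrt x ^ 2 = x := Real.sq_sqrt hx.le
  have h1 : HasDerivAt (fun y : ℝ => Real.sqrt q * Real.sqrt y)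
      (Real.sqrt q * (1 / (2 * Real.sqrt x))) x :=
    (Real.hasDerivAt_sqrt hx.ne').const_mul _
  have h2 : HasDerivAt (fun y : ℝ => (2 * Real.sqrt y)⁻¹)
      (-(2 * (1 / (2 * Real.sqrt x))) / (2 * Real.sqrt x) ^ 2) x :=
    (((Real.hasDerivAt_sqrt hx.ne').const_mul 2).inv (by positivity))
  have := h1.sub h2
  convert this using 1
  · rfl
  · rfl
  · rfl
  rw [lsF']
  field_simp
  linear_combination 4 * hx2

private lemma lsF'_pos (hq : 0 < q) (hx : (0:ℝ) < x) : 0 < lsF' q x := by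
  have := Real.sqrt_pos.2 hq
  have := Real.sqrt_pos.2 hx
  rw [lsF']
  positivity

private lemma lsF_strictMono (hq : 0 < q) : StrictMonoOn (lsF q) (Ioi 0) := by
  intro a ha b hb hab
  have hsa := Real.sqrt_pos.2 (mem_Ioi.1 ha)
  have hsb := Real.sqrt_pos.2 (mem_Ioi.1 hb)
  have hss : Real.sqrt a < Real.sqrt b := Real.sqrt_lt_sqrt (mem_Ioi.1 ha).le hab
  have h1 : Real.sqrt q * Real.sqrt a < Real.sqrt q * Real.sqrt b :=
    mul_lt_mul_of_pos_left hss (Real.sqrt_pos.2 hq)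
  have h2 : (2 * Real.sqrt b)⁻¹ < (2 * Real.sqrt a)⁻¹ := by
    apply inv_strictAnti₀ (by positivity) (by linarith)
  unfold lsF
  linarith

private lemma lsF_image (hq : 0 < q) : lsF q '' (Ioi 0) = univ := by
  have hsq := Real.sqrt_pos.2 hq
  have hhalf : Tendsto (fun u : ℝ => u / 2) atTop atTop := tendsto_id.atTop_div_const two_pos
  have hhalfb : Tendsto (fun u : ℝ => u / 2) atBot atBot := tendsto_id.atBot_div_const two_pos
  have hψ : ∀ u : ℝ, lsF q (Real.exp u)
      = Real.sqrt q * Real.exp (u/2) - (2 * Real.exp (u/2))⁻¹ := by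
    intro u
    have : Real.sqrt (Real.exp u) = Real.exp (u/2) := by
      rw [show Real.exp u = Real.exp (u/2) ^ 2 by rw [sq, ← Real.exp_add, add_halves]]
      exact Real.sqrt_sq (Real.exp_pos _).le
    rw [lsF, this]
  set ψ : ℝ → ℝ := fun u => Real.sqrt q * Real.exp (u/2) - (2 * Real.exp (u/2))⁻¹ with hψdef
  have hcont : Continuous ψ := by
    apply Continuous.sub (by fun_prop)
    exact Continuous.inv₀ (by fun_prop) (fun u => by positivity)
  have htop : Tendsto ψ atTop atTop := by
    have h1 : Tendsto (fun u : ℝ => Real.sqrt q * Real.exp (u/2)) atTop atTop :=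
      (Real.tendsto_exp_atTop.comp hhalf).const_mul_atTop hsq
    have h2 : Tendsto (fun u : ℝ => (2 * Real.exp (u/2))⁻¹) atTop (nhds 0) := by
      apply Filter.Tendsto.inv_tendsto_atTop
      exact (Real.tendsto_exp_atTop.comp hhalf).const_mul_atTop two_pos
    exact h1.atTop_add h2.neg
  have hbot : Tendsto ψ atBot atBot := by
    have h1 : Tendsto (fun u : ℝ => Real.sqrt q * Real.exp (u/2)) atBot (nhds 0) := by
      simpa using (Real.tendsto_exp_atBot.comp hhalfb).const_mul (Real.sqrt q)
    have h2 : Tendsto (fun u : ℝ => (2 * Real.exp (u/2))⁻¹) atBot atTop := by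
      apply Filter.Tendsto.inv_tendsto_nhdsGT_zero
      rw [tendsto_nhdsWithin_iff]
      constructor
      · simpa using ((Real.tendsto_exp_atBot.comp hhalfb).const_mul (2:ℝ))
      · exact Eventually.of_forall fun u => mem_Ioi.2 (by positivity)
    exact h1.add_atBot (tendsto_neg_atTop_atBot.comp h2)
  apply eq_univ_of_forall
  intro y
  obtain ⟨u, hu⟩ := (hcont.surjective htop hbot) y
  exact ⟨Real.exp u, Real.exp_pos u, by rw [hψ u]; exact hu⟩

end base

section base2
variable {q : ℝ}

private lemma lsE_pos {x : ℝ} : 0 < lsE q x := Real.exp_pos _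

private lemma exp_neg_sq_lsF (hq : 0 < q) {x : ℝ} (hx : 0 < x) :
    Real.exp (-(lsF q x ^ 2)) = Real.exp (Real.sqrt q) * lsE q x := by
  have hs : Real.sqrt x ≠ 0 := (Real.sqrt_pos.2 hx).ne'
  have hx2 : Real.sqrt x ^ 2 = x := Real.sq_sqrt hx.le
  have hq2 : Real.sqrt q ^ 2 = q := Real.sq_sqrt hq.le
  rw [lsE, ← Real.exp_add]
  congr 1
  rw [lsF]
  have hr : Real.sqrt q ≠ 0 := (Real.sqrt_pos.2 hq).ne'
  field_simp
  linear_combination (-16*x*Real.sqrt x^4) * hq2 + (4 - 16*q*x*Real.sqrt x^2) * hx2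

private lemma gauss_pull (hq : 0 < q) :
    (Real.sqrt π = ∫ x in Ioi (0:ℝ), lsF' q x * (Real.exp (Real.sqrt q) * lsE q x)) ∧
      IntegrableOn (fun x => lsF' q x * (Real.exp (Real.sqrt q) * lsE q x)) (Ioi 0) := by
  have hderiv : ∀ x ∈ Ioi (0:ℝ), HasDerivWithinAt (lsF q) (lsF' q x) (Ioi 0) x :=
    fun x hx => (lsF_hasDeriv hx).hasDerivWithinAt
  have hinj : InjOn (lsF q) (Ioi 0) := (lsF_strictMono hq).injOn
  have hgint : Integrable (fun y : ℝ => Real.exp (-(y^2))) := by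
    simpa using integrable_exp_neg_mul_sq one_pos
  have hcongr : ∀ x ∈ Ioi (0:ℝ),
      |lsF' q x| • Real.exp (-(lsF q x ^ 2)) = lsF' q x * (Real.exp (Real.sqrt q) * lsE q x) := by
    intro x hx
    rw [abs_of_pos (lsF'_pos hq (mem_Ioi.1 hx)), smul_eq_mul, exp_neg_sq_lsF hq (mem_Ioi.1 hx)]
  constructor
  · have h := integral_image_eq_integral_abs_deriv_smul measurableSet_Ioi hderiv hinj
      (fun y : ℝ => Real.exp (-(y^2)))
    rw [lsF_image hq] at h
    rw [Measure.restrict_univ] at h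
    have hg : ∫ y : ℝ, Real.exp (-(y^2)) = Real.sqrt π := by
      simpa using integral_gaussian 1
    rw [← hg, h]
    exact setIntegral_congr_fun measurableSet_Ioi hcongr
  · have h := (integrableOn_image_iff_integrableOn_abs_deriv_smul measurableSet_Ioi hderiv hinj
      (fun y : ℝ => Real.exp (-(y^2)))).1
    rw [lsF_image hq] at h
    have h2 := h (by simpa [IntegrableOn] using hgint)
    exact h2.congr_fun hcongr measurableSet_Ioi

end base2

section base3
variable {q : ℝ}

private noncomputable def lsK (q : ℝ) : ℝ := ∫ x in Ioi (0:ℝ), lsE q x / Real.sqrt x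
private noncomputable def lsJ (q : ℝ) : ℝ := ∫ x in Ioi (0:ℝ), lsE q x / (x * Real.sqrt x)

private noncomputable def lsA (q x : ℝ) : ℝ := Real.sqrt q / (2 * Real.sqrt x) * lsE q x
private noncomputable def lsB (q x : ℝ) : ℝ := (4 * (x * Real.sqrt x))⁻¹ * lsE q x

private lemma lsE_meas : Measurable (lsE q) := by unfold lsE; fun_prop

private lemma combined_int (hq : 0 < q) :
    IntegrableOn (fun x => lsF' q x * lsE q x) (Ioi 0) := by
  have h := (gauss_pull hq).2
  have h2 := h.const_mul (Real.exp (-Real.sqrt q))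
  have hee : Real.exp (Real.sqrt q) * Real.exp (-Real.sqrt q) = 1 := by
    rw [← Real.exp_add]; simp
  exact MeasureTheory.IntegrableOn.congr_fun h2 (fun x _ => by
    linear_combination (lsF' q x * lsE q x) * hee) measurableSet_Ioi

private lemma combined_split (hx : (0:ℝ) < x) : lsF' q x * lsE q x = lsA q x + lsB q x := by
  rw [lsF', lsA, lsB]; ring

private lemma lsA_nonneg (hx : (0:ℝ) < x) : 0 ≤ lsA q x := by
  have hE : 0 < lsE q x := lsE_pos
  have hs := Real.sqrt_pos.2 hx
  have := Real.sqrt_nonneg q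
  rw [lsA]; positivity

private lemma lsB_nonneg (hx : (0:ℝ) < x) : 0 ≤ lsB q x := by
  have hE : 0 < lsE q x := lsE_pos
  have hs := Real.sqrt_pos.2 hx
  rw [lsB]; positivity

private lemma lsA_meas : Measurable (lsA q) := by unfold lsA lsE; fun_prop
private lemma lsB_meas : Measurable (lsB q) := by unfold lsB lsE; fun_prop

private lemma lsA_int (hq : 0 < q) : IntegrableOn (lsA q) (Ioi 0) := by
  apply Integrable.mono (combined_int hq) lsA_meas.aestronglyMeasurable
  rw [ae_restrict_iff' measurableSet_Ioi]
  apply Eventually.of_forall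
  intro x hx
  have hx' := mem_Ioi.1 hx
  rw [Real.norm_eq_abs, Real.norm_eq_abs, combined_split hx',
    abs_of_nonneg (lsA_nonneg hx'),
    abs_of_nonneg (add_nonneg (lsA_nonneg hx') (lsB_nonneg hx'))]
  linarith [lsB_nonneg (q := q) hx']

private lemma lsB_int (hq : 0 < q) : IntegrableOn (lsB q) (Ioi 0) := by
  apply Integrable.mono (combined_int hq) lsB_meas.aestronglyMeasurable
  rw [ae_restrict_iff' measurableSet_Ioi]
  apply Eventually.of_forall
  intro x hx
  have hx' := mem_Ioi.1 hx
  rw [Real.norm_eq_abs, Real.norm_eq_abs, combined_split hx',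
    abs_of_nonneg (lsB_nonneg hx'),
    abs_of_nonneg (add_nonneg (lsA_nonneg hx') (lsB_nonneg hx'))]
  linarith [lsA_nonneg (q := q) hx']

private lemma lsA_eq (hq : 0 < q) (hx : (0:ℝ) < x) :
    lsA q x = Real.sqrt q / 2 * (lsE q x / Real.sqrt x) := by
  have hs := (Real.sqrt_pos.2 hx).ne'
  rw [lsA]; field_simp

private lemma lsB_eq (hx : (0:ℝ) < x) :
    lsB q x = (4:ℝ)⁻¹ * (lsE q x / (x * Real.sqrt x)) := by
  have hs := (Real.sqrt_pos.2 hx).ne'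
  rw [lsB]; field_simp

private lemma K_int (hq : 0 < q) :
    IntegrableOn (fun x => lsE q x / Real.sqrt x) (Ioi 0) := by
  have h := (lsA_int hq).const_mul (2 / Real.sqrt q)
  apply MeasureTheory.IntegrableOn.congr_fun h ?_ measurableSet_Ioi
  intro x hx
  have hqs := (Real.sqrt_pos.2 hq).ne'
  simp only
  rw [lsA_eq hq (mem_Ioi.1 hx)]
  have hsx := (Real.sqrt_pos.2 (mem_Ioi.1 hx)).ne'
  field_simp

private lemma J_int (hq : 0 < q) :
    IntegrableOn (fun x => lsE q x / (x * Real.sqrt x)) (Ioi 0) := by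
  have h := (lsB_int hq).const_mul (4:ℝ)
  apply MeasureTheory.IntegrableOn.congr_fun h ?_ measurableSet_Ioi
  intro x hx
  simp only
  rw [lsB_eq (q := q) (mem_Ioi.1 hx), ← mul_assoc]
  norm_num

private lemma KJ_eval (hq : 0 < q) :
    Real.sqrt q / 2 * lsK q + (4:ℝ)⁻¹ * lsJ q = Real.sqrt π * Real.exp (-Real.sqrt q) := by
  have h := (gauss_pull hq).1
  have hee : Real.exp (Real.sqrt q) * Real.exp (-Real.sqrt q) = 1 := by
    rw [← Real.exp_add]; simp
  have h2 : Real.sqrt π * Real.exp (-Real.sqrt q)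
      = ∫ x in Ioi (0:ℝ), lsF' q x * lsE q x := by
    rw [h, ← integral_mul_const]
    apply setIntegral_congr_fun measurableSet_Ioi
    intro x _
    linear_combination (lsF' q x * lsE q x) * hee
  rw [h2, setIntegral_congr_fun measurableSet_Ioi
    (fun x hx => combined_split (mem_Ioi.1 hx)),
    integral_add (lsA_int hq) (lsB_int hq),
    setIntegral_congr_fun measurableSet_Ioi (fun x hx => lsA_eq hq (mem_Ioi.1 hx)),
    setIntegral_congr_fun measurableSet_Ioi (fun x hx => lsB_eq (mem_Ioi.1 hx)),
    integral_const_mul, integral_const_mul, lsK, lsJ]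

end base3

section base4
variable {q : ℝ}

private lemma J_eq_K (hq : 0 < q) : lsJ q = 2 * Real.sqrt q * lsK q := by
  set c : ℝ := (4 * q)⁻¹ with hc
  have hcpos : 0 < c := by rw [hc]; positivity
  have hderiv : ∀ x ∈ Ioi (0:ℝ),
      HasDerivWithinAt (fun y => c * y⁻¹) (c * (-(x^2)⁻¹)) (Ioi 0) x :=
    fun x hx => (((hasDerivAt_inv (mem_Ioi.1 hx).ne').const_mul c).hasDerivWithinAt)
  have hinj : InjOn (fun y => c * y⁻¹) (Ioi 0) := by
    intro a ha b hb h
    simp only at h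
    have := mul_left_cancel₀ hcpos.ne' h
    exact inv_injective this
  have himg : (fun y => c * y⁻¹) '' (Ioi 0) = Ioi 0 := by
    ext y
    constructor
    · rintro ⟨x, hx, rfl⟩
      exact mem_Ioi.2 (mul_pos hcpos (inv_pos.2 (mem_Ioi.1 hx)))
    · intro hy
      have hy' := mem_Ioi.1 hy
      refine ⟨c / y, mem_Ioi.2 (by positivity), ?_⟩
      field_simp
    
  have h := integral_image_eq_integral_abs_deriv_smul measurableSet_Ioi hderiv hinj
    (fun y => lsE q y / (y * Real.sqrt y))
  rw [himg] at h
  rw [lsJ, h, lsK, ← integral_const_mul]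
  apply setIntegral_congr_fun measurableSet_Ioi
  intro x hx
  have hx' := mem_Ioi.1 hx
  have hs := Real.sqrt_pos.2 hx'
  have hx2 : Real.sqrt x ^ 2 = x := Real.sq_sqrt hx'.le
  have hq2 : Real.sqrt q ^ 2 = q := Real.sq_sqrt hq.le
  have hqs := Real.sqrt_pos.2 hq
  have hEeq : lsE q (c * x⁻¹) = lsE q x := by
    rw [lsE, lsE]
    congr 1
    rw [hc]
    field_simp
    ring
  have hsqrt : Real.sqrt (c * x⁻¹) = (2 * Real.sqrt q * Real.sqrt x)⁻¹ := by
    rw [hc, show ((4:ℝ)*q)⁻¹ * x⁻¹ = ((2*Real.sqrt q*Real.sqrt x)^2)⁻¹ by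
        rw [← mul_inv]; congr 1; rw [mul_pow, mul_pow, hq2, hx2]; norm_num,
      Real.sqrt_inv, Real.sqrt_sq (by positivity)]
  simp only [smul_eq_mul]
  rw [hEeq, hsqrt, show c * -(x^2)⁻¹ = -(c * (x^2)⁻¹) by ring, abs_neg,
    abs_of_pos (by positivity), hc]
  field_simp
  linear_combination (lsE q x) * hx2

end base4

section base5
variable {q x : ℝ}

private lemma J_val (hq : 0 < q) : lsJ q = 2 * Real.sqrt π * Real.exp (-Real.sqrt q) := by
  have h1 := KJ_eval hq
  have h2 := J_eq_K hq
  rw [h2] at h1 ⊢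
  linear_combination 2 * h1

private lemma levy_eq (hx : 0 < x) :
    Real.exp (-(q * x)) * levySmirnov x
      = (2 * Real.sqrt π)⁻¹ * (lsE q x / (x * Real.sqrt x)) := by
  have hs := Real.sqrt_pos.2 hx
  have hpi := Real.sqrt_pos.2 Real.pi_pos
  have h32 : x ^ ((3:ℝ)/2) = x * Real.sqrt x := by
    rw [show (3:ℝ)/2 = 1 + 1/2 by norm_num, Real.rpow_add hx, Real.rpow_one,
      ← Real.sqrt_eq_rpow]
  rw [levySmirnov, h32, lsE,
    show -(q*x) - 1/(4*x) = (-1/(4*x)) + (-(q*x)) by ring, Real.exp_add]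
  field_simp

private lemma levy_laplace (hq : 0 < q) :
    ∫ x in Ioi (0:ℝ), Real.exp (-(q * x)) * levySmirnov x = Real.exp (-Real.sqrt q) := by
  have hpi := Real.sqrt_pos.2 Real.pi_pos
  rw [setIntegral_congr_fun measurableSet_Ioi
      (fun x hx => levy_eq (q := q) (mem_Ioi.1 hx)),
    integral_const_mul, ← lsJ, J_val hq]
  field_simp

private lemma levy_laplace_int (hq : 0 < q) :
    IntegrableOn (fun x => Real.exp (-(q * x)) * levySmirnov x) (Ioi 0) := by
  have h := (J_int hq).const_mul (2 * Real.sqrt π)⁻¹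
  exact MeasureTheory.IntegrableOn.congr_fun h
    (fun x hx => (levy_eq (mem_Ioi.1 hx)).symm) measurableSet_Ioi

lemma levySmirnov_pos (hx : 0 < x) : 0 < levySmirnov x := by
  have hpi := Real.sqrt_pos.2 Real.pi_pos
  have := Real.rpow_pos_of_pos hx ((3:ℝ)/2)
  rw [levySmirnov]
  positivity

end base5

theorem laplace_half_selfComposition :
    ∀ p : ℝ, 0 < p →
      (∫ x in Ioi (0 : ℝ), Real.exp (-p * x) *
        ∫ t in Ioi (0 : ℝ), (t ^ (2 : ℕ))⁻¹ * levySmirnov (x / t ^ (2 : ℕ)) * levySmirnov t)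
        = Real.exp (-(p ^ ((1 : ℝ) / 4))) := by
  intro p hp
  set s : ℝ := Real.sqrt p with hs
  have hsp : 0 < s := Real.sqrt_pos.2 hp
  set f : ℝ → ℝ → ℝ := fun x t =>
    Real.exp (-p * x) * ((t ^ (2:ℕ))⁻¹ * levySmirnov (x / t ^ (2:ℕ)) * levySmirnov t) with hf
  have hmeas_ls : Measurable levySmirnov := by unfold levySmirnov; fun_prop
  have hmeasF : Measurable (Function.uncurry f) := by
    apply Measurable.mul
    · fun_prop
    · apply Measurable.mul
      · apply Measurable.mul
        · fun_prop
        · exact hmeas_ls.comp (by fun_prop)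
      · exact hmeas_ls.comp measurable_snd
  -- inner evaluation for t > 0
  have inner_eval : ∀ t : ℝ, t ∈ Ioi (0:ℝ) →
      ∫ x in Ioi (0:ℝ), f x t = Real.exp (-(s * t)) * levySmirnov t := by
    intro t ht
    have ht' := mem_Ioi.1 ht
    have ht2 : (0:ℝ) < t ^ (2:ℕ) := by positivity
    set G : ℝ → ℝ := fun u => Real.exp (-(p * t ^ (2:ℕ) * u)) * levySmirnov u with hG
    have hq : 0 < p * t ^ (2:ℕ) := by positivity
    have hptt : Real.sqrt (p * t ^ (2:ℕ)) = s * t := by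
      rw [Real.sqrt_mul hp.le, Real.sqrt_sq ht'.le]
    have step : ∀ x : ℝ, f x t = ((t ^ (2:ℕ))⁻¹ * levySmirnov t) * G (x * (t ^ (2:ℕ))⁻¹) := by
      intro x
      rw [hf, hG]
      simp only
      rw [show p * t ^ (2:ℕ) * (x * (t ^ (2:ℕ))⁻¹) = p * x by
        field_simp]
      rw [show x * (t ^ (2:ℕ))⁻¹ = x / t ^ (2:ℕ) by rw [div_eq_mul_inv]]
      ring_nf
    rw [setIntegral_congr_fun measurableSet_Ioi (fun x _ => step x), integral_const_mul,
      integral_comp_mul_right_Ioi G 0 (inv_pos.2 ht2)]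
    rw [zero_mul, inv_inv, smul_eq_mul]
    have hGint : ∫ x in Ioi (0:ℝ), G x = Real.exp (-(s * t)) := by
      rw [hG, ← hptt]
      exact levy_laplace hq
    rw [hGint]
    field_simp
  -- section integrability for t > 0
  have sec_int : ∀ t : ℝ, t ∈ Ioi (0:ℝ) →
      Integrable (fun x => f x t) (volume.restrict (Ioi 0)) := by
    intro t ht
    have ht' := mem_Ioi.1 ht
    have ht2 : (0:ℝ) < t ^ (2:ℕ) := by positivity
    have hq : 0 < p * t ^ (2:ℕ) := by positivity
    set G : ℝ → ℝ := fun u => Real.exp (-(p * t ^ (2:ℕ) * u)) * levySmirnov u with hG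
    have hGint : IntegrableOn G (Ioi 0) := levy_laplace_int hq
    have h1 : IntegrableOn (fun x => G (x * (t ^ (2:ℕ))⁻¹)) (Ioi 0) := by
      have := (integrableOn_Ioi_comp_mul_right_iff G 0 (inv_pos.2 ht2)).2
      rw [zero_mul] at this
      exact this hGint
    have h2 := h1.const_mul ((t ^ (2:ℕ))⁻¹ * levySmirnov t)
    apply MeasureTheory.IntegrableOn.congr_fun h2 ?_ measurableSet_Ioi
    intro x _
    rw [hf, hG]
    simp only
    rw [show p * t ^ (2:ℕ) * (x * (t ^ (2:ℕ))⁻¹) = p * x by field_simp]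
    rw [show x * (t ^ (2:ℕ))⁻¹ = x / t ^ (2:ℕ) by rw [div_eq_mul_inv]]
    ring_nf
  -- nonnegativity on sections
  have hnn : ∀ t : ℝ, t ∈ Ioi (0:ℝ) → ∀ x : ℝ, x ∈ Ioi (0:ℝ) → 0 ≤ f x t := by
    intro t ht x hx
    have ht' := mem_Ioi.1 ht
    have hx' := mem_Ioi.1 hx
    have h1 : 0 < x / t ^ (2:ℕ) := by positivity
    have := levySmirnov_pos h1
    have := levySmirnov_pos ht'
    rw [hf]
    positivity
  -- norm integral equals the evaluated inner integral
  have norm_eval : ∀ t : ℝ, t ∈ Ioi (0:ℝ) →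
      (∫ x in Ioi (0:ℝ), ‖f x t‖) = Real.exp (-(s * t)) * levySmirnov t := by
    intro t ht
    rw [← inner_eval t ht]
    apply setIntegral_congr_fun measurableSet_Ioi
    intro x hx
    exact norm_of_nonneg (hnn t ht x hx)
  -- product integrability
  have hprod : Integrable (Function.uncurry f)
      ((volume.restrict (Ioi 0)).prod (volume.restrict (Ioi 0))) := by
    rw [integrable_prod_iff' hmeasF.aestronglyMeasurable]
    constructor
    · rw [ae_restrict_iff' measurableSet_Ioi]
      exact Eventually.of_forall sec_int
    · have hint : IntegrableOn (fun t => Real.exp (-(s * t)) * levySmirnov t) (Ioi 0) :=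
        levy_laplace_int hsp
      exact MeasureTheory.IntegrableOn.congr_fun hint
        (fun t ht => (norm_eval t ht).symm) measurableSet_Ioi
  -- main computation
  have hswap := integral_integral_swap hprod
  calc (∫ x in Ioi (0 : ℝ), Real.exp (-p * x) *
        ∫ t in Ioi (0 : ℝ), (t ^ (2:ℕ))⁻¹ * levySmirnov (x / t ^ (2:ℕ)) * levySmirnov t)
      = ∫ x in Ioi (0:ℝ), ∫ t in Ioi (0:ℝ), f x t := by
        apply setIntegral_congr_fun measurableSet_Ioi
        intro x _
        exact (integral_const_mul _ _).symm
    _ = ∫ t in Ioi (0:ℝ), ∫ x in Ioi (0:ℝ), f x t := hswap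
    _ = ∫ t in Ioi (0:ℝ), Real.exp (-(s * t)) * levySmirnov t :=
        setIntegral_congr_fun measurableSet_Ioi inner_eval
    _ = Real.exp (-Real.sqrt s) := levy_laplace hsp
    _ = Real.exp (-(p ^ ((1:ℝ)/4))) := by
        congr 1
        rw [hs, Real.sqrt_eq_rpow, Real.sqrt_eq_rpow, ← Real.rpow_mul hp.le]
        norm_num
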